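/- arXiv:2302.11035 — 2 statements merged into one kernel-verified Lean document; each statement's English description precedes it below -/
import Mathlib

section
/- Every internally vertex-color-avoiding connected graph on n vertices colored with exactly k ≥ 2 colors has at least ⌈(2k-1)n/(2k-2) - k/(k-1)⌉ edges. -/
/-- The spanning subgraph obtained from `G` by removing all edges of color `c`. -/
def SimpleGraph.deleteColor {V C : Type*} (G : SimpleGraph V) (col : Sym2 V → C) (c : C) :
    SimpleGraph V :=
  G.deleteEdges {e | col e = c}

/-- An edge-colored graph is edge-color-avoiding connected if after removing the edges of any
single color it remains connected. -/
def EdgeColorAvoidingConnected {V C : Type*} (G : SimpleGraph V) (col : Sym2 V → C) : Prop :=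
  ∀ c : C, (G.deleteColor col c).Connected

/-- Vertices `u` and `v` are vertex-`c`-avoiding connected: there is a `u`-`v` walk, and either
one of `u`, `v` has color `c`, or some `u`-`v` walk contains no vertex of color `c`. -/
def VertexCAvoidingConnected {V C : Type*} (G : SimpleGraph V) (col : V → C) (c : C)
    (u v : V) : Prop :=
  G.Reachable u v ∧
    (col u = c ∨ col v = c ∨ ∃ p : G.Walk u v, ∀ w ∈ p.support, col w ≠ c)

/-- A vertex-colored graph is vertex-color-avoiding connected if any two vertices are
vertex-`c`-avoiding connected for every color `c`. -/
def VertexColorAvoidingConnected {V C : Type*} (G : SimpleGraph V) (col : V → C) : Prop :=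
  ∀ (c : C) (u v : V), VertexCAvoidingConnected G col c u v

/-- Vertices `u` and `v` are internally vertex-`c`-avoiding connected: there is a `u`-`v` walk
containing no internal vertices of color `c`. -/
def InternallyVertexCAvoidingConnected {V C : Type*} (G : SimpleGraph V) (col : V → C) (c : C)
    (u v : V) : Prop :=
  ∃ p : G.Walk u v, ∀ w ∈ p.support, w ≠ u → w ≠ v → col w ≠ c

/-- A vertex-colored graph is internally vertex-color-avoiding connected if any two vertices are
internally vertex-`c`-avoiding connected for every color `c`. -/
def InternallyVertexColorAvoidingConnected {V C : Type*} (G : SimpleGraph V) (col : V → C) :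
    Prop :=
  ∀ (c : C) (u v : V), InternallyVertexCAvoidingConnected G col c u v

open SimpleGraph Finset

open SimpleGraph Finset

lemma aux_card_le_of_connected {V : Type*} [Fintype V] {G : SimpleGraph V}
    (hc : G.Connected) : Fintype.card V ≤ G.edgeSet.ncard + 1 := by
  classical
  obtain ⟨root⟩ := hc.nonempty
  have hpar : ∀ v : V, v ≠ root → ∃ p : V, G.Adj v p ∧ G.dist p root < G.dist v root := by
    intro v hv
    obtain ⟨p, hp⟩ := (hc.preconnected v root).exists_walk_length_eq_dist
    have hd : 0 < G.dist v root := hc.pos_dist_of_ne hv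
    have hnil : ¬ p.Nil := by
      rw [SimpleGraph.Walk.nil_iff_length_eq]
      omega
    refine ⟨p.getVert 1, p.adj_snd hnil, ?_⟩
    have h1 : G.dist (p.getVert 1) root ≤ p.tail.length := SimpleGraph.dist_le _
    have h2 : p.tail.length + 1 = p.length := SimpleGraph.Walk.length_tail_add_one hnil
    omega
  choose par hadj hdec using hpar
  have hinj : ({v | v ≠ root} : Set V).ncard ≤ G.edgeSet.ncard := by
    apply Set.ncard_le_ncard_of_injOn
      (fun v => if h : v ≠ root then s(v, par v h) else s(v, v))
    · intro a ha
      simp only [Set.mem_setOf_eq] at ha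
      simp only [dif_pos ha]
      exact hadj a ha
    · intro a ha b hb hab
      simp only [Set.mem_setOf_eq] at ha hb
      simp only [dif_pos ha, dif_pos hb, Sym2.eq_iff] at hab
      rcases hab with ⟨h1, _⟩ | ⟨h1, h2⟩
      · exact h1
      · exfalso
        have d1 := hdec a ha
        have d2 := hdec b hb
        rw [h2] at d1
        rw [← h1] at d2
        omega
  have hcompl : ({v | v ≠ root} : Set V) = ↑(Finset.univ.erase root) := by
    ext x; simp
  rw [hcompl, Set.ncard_coe_finset, Finset.card_erase_of_mem (Finset.mem_univ _),
    Finset.card_univ] at hinj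
  have : 0 < Fintype.card V := Fintype.card_pos_iff.mpr ⟨root⟩
  omega

lemma aux_reachable_induce {V : Type*} {G : SimpleGraph V} {s : Set V} :
    ∀ {u v : V} (p : G.Walk u v), (∀ w ∈ p.support, w ∈ s) → ∀ (hu : u ∈ s) (hv : v ∈ s),
      (G.induce s).Reachable ⟨u, hu⟩ ⟨v, hv⟩
  | u, _, SimpleGraph.Walk.nil, _, hu, hv => Reachable.refl _
  | u, v, @SimpleGraph.Walk.cons _ _ _ b _ h q, hsup, hu, hv => by
    have hb : b ∈ s := hsup b (by simp)
    have hadj : (G.induce s).Adj ⟨u, hu⟩ ⟨b, hb⟩ := h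
    exact hadj.reachable.trans
      (aux_reachable_induce q (fun w hw => hsup w (by simp [hw])) hb hv)

lemma aux_induce_edges {V : Type*} [Fintype V] {G : SimpleGraph V} {s : Set V} :
    (G.induce s).edgeSet.ncard ≤ {e ∈ G.edgeSet | ∀ w ∈ e, w ∈ s}.ncard := by
  classical
  apply Set.ncard_le_ncard_of_injOn (Sym2.map Subtype.val)
  · intro e he
    induction e with
    | _ a b =>
      simp only [SimpleGraph.mem_edgeSet] at he
      have hab : G.Adj ↑a ↑b := he
      refine ⟨by simpa using hab, ?_⟩
      intro w hw
      rw [Sym2.map_pair_eq, Sym2.mem_iff] at hw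
      rcases hw with rfl | rfl
      · exact a.2
      · exact b.2
  · exact (Sym2.map.injective Subtype.val_injective).injOn

/-- Every internally vertex-color-avoiding connected graph on `n` vertices colored with exactly
`k ≥ 2` colors has at least `⌈(2k-1)n/(2k-2) - k/(k-1)⌉` edges. -/
theorem stmt16 {V C : Type*} [Fintype V] (G : SimpleGraph V) (col : V → C) (k : ℕ)
    (hk : 2 ≤ k) (hcols : (Set.range col).ncard = k)
    (h : InternallyVertexColorAvoidingConnected G col) :
    ⌈(2 * (k : ℚ) - 1) * Fintype.card V / (2 * k - 2) - k / (k - 1)⌉ ≤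
      (G.edgeSet.ncard : ℤ) := by
  classical
  replace h : ∀ (c : C) (u v : V),
      ∃ p : G.Walk u v, ∀ w ∈ p.support, w ≠ u → w ≠ v → col w ≠ c := h
  have hnV : Nonempty V := by
    rcases isEmpty_or_nonempty V with hV | hV
    · exfalso
      rw [Set.range_eq_empty col, Set.ncard_empty] at hcols
      omega
    · exact hV
  have hrfin : (Set.range col).Finite := Set.finite_range col
  set n := Fintype.card V with hn
  set colors : Finset C := hrfin.toFinset with hcolorsdef
  have hcolcard : colors.card = k := by
    rw [← hcols, Set.ncard_eq_toFinset_card _ hrfin]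
  have hmemcolors : ∀ v : V, col v ∈ colors := fun v => hrfin.mem_toFinset.mpr ⟨v, rfl⟩
  set EF : Finset (Sym2 V) := G.edgeFinset with hEFdef
  have hmEF : G.edgeSet.ncard = EF.card := by
    rw [hEFdef]; exact Set.ncard_eq_toFinset_card' _
  have hexother : ∀ c : C, ∃ v : V, col v ≠ c := by
    intro c
    have h1 : 1 < colors.card := by omega
    obtain ⟨c', hc', hne⟩ := Finset.exists_mem_ne h1 c
    obtain ⟨v, rfl⟩ := hrfin.mem_toFinset.mp hc'
    exact ⟨v, hne⟩
  -- Claim 1 : removing the vertices of any color keeps connectivity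
  have claim1 : ∀ c, n ≤ (EF.filter (fun e => ∀ w ∈ e, col w ≠ c)).card
      + (Finset.univ.filter (fun v => col v = c)).card + 1 := by
    intro c
    set s : Set V := {v | col v ≠ c} with hs
    obtain ⟨w0, hw0⟩ := hexother c
    have hw0s : w0 ∈ s := hw0
    haveI : Nonempty ↥s := ⟨⟨w0, hw0s⟩⟩
    have hconn : (G.induce s).Connected := by
      constructor
      rintro ⟨u, hu⟩ ⟨v, hv⟩
      obtain ⟨p, hp⟩ := h c u v
      refine aux_reachable_induce p (fun w hw => ?_) hu hv
      by_cases h1 : w = u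
      · subst h1; exact hu
      by_cases h2 : w = v
      · subst h2; exact hv
      exact hp w hw h1 h2
    have h1 := aux_card_le_of_connected hconn
    have h2 := aux_induce_edges (G := G) (s := s)
    have h3 : {e ∈ G.edgeSet | ∀ w ∈ e, w ∈ s}
        = ↑(EF.filter (fun e => ∀ w ∈ e, col w ≠ c)) := by
      ext e
      simp [hEFdef, SimpleGraph.mem_edgeFinset, hs, Set.mem_setOf_eq]
    rw [h3, Set.ncard_coe_finset] at h2
    have h4 : Fintype.card ↥s + (Finset.univ.filter (fun v => col v = c)).card = n := by
      rw [← Nat.card_eq_fintype_card, Nat.card_coe_set_eq]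
      have h5 : (sᶜ : Set V) = ↑(Finset.univ.filter (fun v => col v = c)) := by
        ext x; simp [hs]
      have h6 : (Finset.univ.filter (fun v => col v = c)).card = (sᶜ : Set V).ncard := by
        rw [h5, Set.ncard_coe_finset]
      rw [h6, Set.ncard_add_ncard_compl, Nat.card_eq_fintype_card]
    omega
  -- Claim 2 : removing monochromatic edges of any color keeps connectivity
  have claim2 : ∀ c, n + (EF.filter (fun e => ∀ w ∈ e, col w = c)).card ≤ EF.card + 1 := by
    intro c
    set M : Set (Sym2 V) := {e | ∀ w ∈ e, col w = c} with hM
    have hreach : ∀ u v : V, ¬(col u = c ∧ col v = c) → (G.deleteEdges M).Reachable u v := by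
      intro u v huv
      obtain ⟨p, hp⟩ := h c u v
      have hpe : ∀ e ∈ p.edges, e ∉ M := by
        intro e
        induction e with
        | _ x y =>
          intro hmem hMe
          have hcx : col x = c := hMe x (Sym2.mem_mk_left x y)
          have hcy : col y = c := hMe y (Sym2.mem_mk_right x y)
          have hxy : x ≠ y :=
            ((SimpleGraph.mem_edgeSet G).mp (p.edges_subset_edgeSet hmem)).ne
          have hxs := p.fst_mem_support_of_mem_edges hmem
          have hys := p.snd_mem_support_of_mem_edges hmem
          have hx : x = u ∨ x = v := by
            by_contra hh
            push_neg at hh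
            exact hp x hxs hh.1 hh.2 hcx
          have hy : y = u ∨ y = v := by
            by_contra hh
            push_neg at hh
            exact hp y hys hh.1 hh.2 hcy
          rcases hx with rfl | rfl <;> rcases hy with rfl | rfl
          · exact hxy rfl
          · exact huv ⟨hcx, hcy⟩
          · exact huv ⟨hcy, hcx⟩
          · exact hxy rfl
      exact ⟨p.toDeleteEdges M hpe⟩
    haveI := hnV
    have hG2 : (G.deleteEdges M).Connected := by
      constructor
      intro u v
      by_cases huv : col u = c ∧ col v = c
      · obtain ⟨w0, hw0⟩ := hexother c
        exact (hreach u w0 (fun hh => hw0 hh.2)).trans (hreach w0 v (fun hh => hw0 hh.1))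
      · exact hreach u v huv
    have h1 := aux_card_le_of_connected hG2
    have h2 : (G.deleteEdges M).edgeSet
        = ↑(EF.filter (fun e => ¬ ∀ w ∈ e, col w = c)) := by
      rw [SimpleGraph.edgeSet_deleteEdges]
      ext e
      simp [hM, hEFdef, SimpleGraph.mem_edgeFinset]
    rw [h2, Set.ncard_coe_finset, Finset.filter_not,
      Finset.card_sdiff_of_subset (Finset.filter_subset _ _)] at h1
    have h3 : (EF.filter (fun e => ∀ w ∈ e, col w = c)).card ≤ EF.card :=
      Finset.card_le_card (Finset.filter_subset _ _)
    omega
  -- the color classes partition the vertices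
  have sumVc : ∑ c ∈ colors, (Finset.univ.filter (fun v => col v = c)).card = n := by
    rw [← Finset.card_eq_sum_card_fiberwise (fun x _ => hmemcolors x), Finset.card_univ]
  -- double counting
  have perEdge : ∀ e ∈ EF, 2 + (colors.filter (fun c => ∀ w ∈ e, col w ≠ c)).card
      = k + (colors.filter (fun c => ∀ w ∈ e, col w = c)).card := by
    intro e he
    induction e with
    | _ a b =>
      have hadj : G.Adj a b := by
        rw [hEFdef, SimpleGraph.mem_edgeFinset, SimpleGraph.mem_edgeSet] at he
        exact he
      have hab : a ≠ b := hadj.ne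
      have e1 : colors.filter (fun c => ∀ w ∈ s(a, b), col w ≠ c)
          = colors.filter (fun c => ¬(col a = c ∨ col b = c)) := by
        apply Finset.filter_congr
        intro c _
        simp [Sym2.mem_iff, or_imp, forall_and, not_or]
      have hsplit := Finset.card_filter_add_card_filter_not
        (s := colors) (p := fun c => ¬(col a = c ∨ col b = c))
      have hXeq : colors.filter (fun c => ¬¬(col a = c ∨ col b = c))
          = {col a, col b} := by
        ext c
        simp only [Finset.mem_filter, Finset.mem_insert, Finset.mem_singleton, not_not]
        constructor
        · rintro ⟨-, rfl | rfl⟩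
          · exact Or.inl rfl
          · exact Or.inr rfl
        · rintro (rfl | rfl)
          · exact ⟨hmemcolors a, Or.inl rfl⟩
          · exact ⟨hmemcolors b, Or.inr rfl⟩
      have hXcard : ({col a, col b} : Finset C).card = if col a = col b then 1 else 2 := by
        split
        · next heq => rw [heq]; simp
        · next hne => exact Finset.card_pair hne
      have e2 : colors.filter (fun c => ∀ w ∈ s(a, b), col w = c)
          = colors.filter (fun c => col a = c ∧ col b = c) := by
        apply Finset.filter_congr
        intro c _
        simp [Sym2.mem_iff, or_imp, forall_and]
      have hIncard : (colors.filter (fun c => col a = c ∧ col b = c)).card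
          = if col a = col b then 1 else 0 := by
        split
        · next heq =>
          have : colors.filter (fun c => col a = c ∧ col b = c) = {col a} := by
            ext c
            simp only [Finset.mem_filter, Finset.mem_singleton]
            constructor
            · rintro ⟨-, h1, -⟩; exact h1.symm
            · rintro rfl; exact ⟨hmemcolors a, rfl, heq.symm⟩
          rw [this, Finset.card_singleton]
        · next hne =>
          have : colors.filter (fun c => col a = c ∧ col b = c) = ∅ := by
            ext c
            simp only [Finset.mem_filter, Finset.notMem_empty, iff_false, not_and]
            rintro - rfl h2
            exact hne h2.symm
          rw [this, Finset.card_empty]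
      rw [e1, e2, hIncard]
      rw [hXeq, hXcard] at hsplit
      rw [hcolcard] at hsplit
      split_ifs at hsplit ⊢ <;> omega
  set A := ∑ c ∈ colors, (EF.filter (fun e => ∀ w ∈ e, col w ≠ c)).card with hA
  set B := ∑ c ∈ colors, (EF.filter (fun e => ∀ w ∈ e, col w = c)).card with hB
  have swap1 : A = ∑ e ∈ EF, (colors.filter (fun c => ∀ w ∈ e, col w ≠ c)).card := by
    rw [hA]
    simp_rw [Finset.card_filter]
    exact Finset.sum_comm
  have swap2 : B = ∑ e ∈ EF, (colors.filter (fun c => ∀ w ∈ e, col w = c)).card := by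
    rw [hB]
    simp_rw [Finset.card_filter]
    exact Finset.sum_comm
  have claim3 : 2 * EF.card + A = k * EF.card + B := by
    rw [swap1, swap2]
    have hc := Finset.sum_congr rfl perEdge
    simp only [Finset.sum_add_distrib, Finset.sum_const, smul_eq_mul] at hc
    linarith [hc]
  have s1 : k * n ≤ A + n + k := by
    have hle : ∑ _c ∈ colors, n ≤ ∑ c ∈ colors,
        ((EF.filter (fun e => ∀ w ∈ e, col w ≠ c)).card
          + (Finset.univ.filter (fun v => col v = c)).card + 1) :=
      Finset.sum_le_sum (fun c _ => claim1 c)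
    simp only [Finset.sum_add_distrib, Finset.sum_const, smul_eq_mul, mul_one] at hle
    rw [sumVc, hcolcard, ← hA] at hle
    linarith [hle]
  have s2 : k * n + B ≤ k * EF.card + k := by
    have hle : ∑ c ∈ colors,
        (n + (EF.filter (fun e => ∀ w ∈ e, col w = c)).card)
          ≤ ∑ _c ∈ colors, (EF.card + 1) :=
      Finset.sum_le_sum (fun c _ => claim2 c)
    simp only [Finset.sum_add_distrib, Finset.sum_const, smul_eq_mul] at hle
    rw [hcolcard, ← hB] at hle
    nlinarith [hle]
  -- final arithmetic
  have hkQ : (2 : ℚ) ≤ (k : ℚ) := by exact_mod_cast hk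
  have keyQ : (2 * (k : ℚ) - 1) * n ≤ (2 * k - 2) * EF.card + 2 * k := by
    have c1 : (k : ℚ) * n ≤ A + n + k := by exact_mod_cast s1
    have c2 : (k : ℚ) * n + B ≤ k * EF.card + k := by exact_mod_cast s2
    have c3 : 2 * (EF.card : ℚ) + A = k * EF.card + B := by exact_mod_cast claim3
    linarith
  rw [Int.ceil_le, hmEF]
  push_cast
  have hd : (0 : ℚ) < 2 * k - 2 := by linarith
  rw [sub_le_iff_le_add, div_le_iff₀ hd]
  have hexp : ((EF.card : ℚ) + k / (k - 1)) * (2 * k - 2) = (2 * k - 2) * EF.card + 2 * k := by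
    have hk1 : (k : ℚ) - 1 ≠ 0 := by linarith
    field_simp
  rw [hexp]
  exact keyQ
end

section
/- Let G be a vertex-color-avoiding connected graph on n vertices colored with exactly 2 colors. Then G contains a vertex-color-avoiding connected spanning subgraph with exactly n-1 edges; namely, the union of a spanning tree of the subgraph induced by the vertices of each of the two colors, together with one edge joining vertices of different colors. -/
open SimpleGraph

private lemma preconnected_of_adj_reach {V : Type*} {G G' : SimpleGraph V}
    (h : ∀ a b, G.Adj a b → G'.Reachable a b) (hG : G.Preconnected) : G'.Preconnected := by
  intro x y
  obtain ⟨p⟩ := hG x y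
  induction p with
  | nil => exact Reachable.refl _
  | cons ha q ih => exact (h _ _ ha).trans ih

private lemma exists_tree_le' {V : Type*} [Fintype V] :
    ∀ (n : ℕ) (G : SimpleGraph V), G.edgeSet.ncard = n → G.Connected →
      ∃ T, T ≤ G ∧ T.IsTree := by
  intro n
  induction n using Nat.strong_induction_on with
  | _ n ih =>
    intro G hn hG
    by_cases hac : G.IsAcyclic
    · exact ⟨G, le_rfl, ⟨hG, hac⟩⟩
    · rw [isAcyclic_iff_forall_adj_isBridge] at hac
      push_neg at hac
      obtain ⟨v, w, hvw, hbr⟩ := hac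
      rw [isBridge_iff] at hbr
      push_neg at hbr
      have hreach : (G \ fromEdgeSet {s(v, w)}).Reachable v w := hbr
      set G' := G \ fromEdgeSet {s(v, w)} with hG'
      have hle : G' ≤ G := sdiff_le
      have hconn : G'.Connected := by
        have hne : Nonempty V := hG.nonempty
        refine ⟨preconnected_of_adj_reach (fun a b hab => ?_) hG.preconnected⟩
        by_cases he : s(a, b) = s(v, w)
        · rw [Sym2.eq_iff] at he
          rcases he with ⟨rfl, rfl⟩ | ⟨rfl, rfl⟩
          · exact hreach
          · exact hreach.symm
        · exact Adj.reachable (by simp [hG', hab, he])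
      have hlt : G'.edgeSet.ncard < n := by
        rw [← hn]
        apply Set.ncard_lt_ncard _ (G.edgeSet.toFinite)
        refine ⟨edgeSet_mono hle, fun hsub => ?_⟩
        have h1 : s(v, w) ∈ G.edgeSet := hvw
        have h2 := hsub h1
        simp [hG', hvw, G.ne_of_adj hvw] at h2
      obtain ⟨T, hT, hTt⟩ := ih _ hlt G' rfl hconn
      exact ⟨T, hT.trans hle, hTt⟩

private lemma edgeSet_map' {V W : Type*} (f : V ↪ W) (G : SimpleGraph V) :
    (G.map f).edgeSet = Sym2.map f '' G.edgeSet := by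
  ext e
  refine Sym2.inductionOn e fun x y => ?_
  simp only [mem_edgeSet, map_adj, Set.mem_image]
  constructor
  · rintro ⟨a, b, hab, rfl, rfl⟩
    exact ⟨s(a, b), hab, rfl⟩
  · rintro ⟨e', he', hmap⟩
    induction e' using Sym2.inductionOn with
    | _ a b =>
      rw [Sym2.map_pair_eq, Sym2.eq_iff] at hmap
      rw [SimpleGraph.mem_edgeSet] at he'
      rcases hmap with ⟨rfl, rfl⟩ | ⟨rfl, rfl⟩
      · exact ⟨a, b, he', rfl, rfl⟩
      · exact ⟨b, a, he'.symm, rfl, rfl⟩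

private lemma reach_induce {V : Type*} {G : SimpleGraph V} {A : Set V} :
    ∀ {u v : V} (p : G.Walk u v), (∀ w ∈ p.support, w ∈ A) →
    ∀ (hu : u ∈ A) (hv : v ∈ A), (G.induce A).Reachable ⟨u, hu⟩ ⟨v, hv⟩ := by
  intro u v p
  induction p with
  | nil => intro _ hu hv; exact Reachable.refl _
  | @cons u u' v h q ih =>
    intro hs hu hv
    have hu' : u' ∈ A := hs _ (by simp)
    refine Reachable.trans (Adj.reachable ?_) (ih (fun w hw' => hs w (by simp [hw'])) hu' hv)
    exact h


/-- A vertex-color-avoiding connected graph `G` on `n` vertices colored with exactly 2 colors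
contains a vertex-color-avoiding connected spanning subgraph with exactly `n - 1` edges. -/
theorem stmt18 {V C : Type*} [Fintype V] (G : SimpleGraph V) (col : V → C)
    (hcols : (Set.range col).ncard = 2)
    (h : VertexColorAvoidingConnected G col) :
    ∃ G' : SimpleGraph V, G' ≤ G ∧ VertexColorAvoidingConnected G' col ∧
      G'.edgeSet.ncard = Fintype.card V - 1 := by
  classical
  obtain ⟨c1, c2, hc12, hrange⟩ := Set.ncard_eq_two.mp hcols
  set A : Set V := {v | col v = c1} with hA
  set B : Set V := {v | col v = c2} with hB
  have hcol2 : ∀ v : V, col v = c1 ∨ col v = c2 := by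
    intro v
    have hv : col v ∈ Set.range col := ⟨v, rfl⟩
    rw [hrange] at hv
    simpa using hv
  have hAB : ∀ v, v ∉ A → v ∈ B := fun v hv => (hcol2 v).resolve_left hv
  have hBA : ∀ v, v ∉ B → v ∈ A := fun v hv => (hcol2 v).resolve_right hv
  have hdisj : ∀ v, v ∈ A → v ∈ B → False := fun v h1 h2 => hc12 (h1.symm.trans h2)
  obtain ⟨a0, ha0⟩ : ∃ v, v ∈ A := by
    have : c1 ∈ Set.range col := hrange ▸ Set.mem_insert _ _
    obtain ⟨v, hv⟩ := this
    exact ⟨v, hv⟩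
  obtain ⟨b0, hb0⟩ : ∃ v, v ∈ B := by
    have : c2 ∈ Set.range col := hrange ▸ Set.mem_insert_of_mem _ rfl
    obtain ⟨v, hv⟩ := this
    exact ⟨v, hv⟩
  -- induced subgraphs are connected
  have hconnA : (G.induce A).Connected := by
    have hne : Nonempty A := ⟨⟨a0, ha0⟩⟩
    refine ⟨?_⟩
    rintro ⟨u, hu⟩ ⟨v, hv⟩
    obtain ⟨hr, hcase⟩ := h c2 u v
    rcases hcase with h1 | h1 | ⟨p, hp⟩
    · exact absurd (hu.symm.trans h1) hc12
    · exact absurd (hv.symm.trans h1) hc12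
    · exact reach_induce p (fun w hw => hBA w (hp w hw)) hu hv
  have hconnB : (G.induce B).Connected := by
    have hne : Nonempty B := ⟨⟨b0, hb0⟩⟩
    refine ⟨?_⟩
    rintro ⟨u, hu⟩ ⟨v, hv⟩
    obtain ⟨hr, hcase⟩ := h c1 u v
    rcases hcase with h1 | h1 | ⟨p, hp⟩
    · exact absurd (h1.symm.trans hu) hc12
    · exact absurd (h1.symm.trans hv) hc12
    · exact reach_induce p (fun w hw => hAB w (hp w hw)) hu hv
  obtain ⟨TA, hTAle, hTAtree⟩ := exists_tree_le' _ (G.induce A) rfl hconnA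
  obtain ⟨TB, hTBle, hTBtree⟩ := exists_tree_le' _ (G.induce B) rfl hconnB
  set embA : A ↪ V := Function.Embedding.subtype _ with hembA
  set embB : B ↪ V := Function.Embedding.subtype _ with hembB
  -- crossing edge
  obtain ⟨p0⟩ : G.Reachable a0 b0 := (h c1 a0 b0).1
  obtain ⟨d, _, hdA, hdnA⟩ := p0.exists_boundary_dart A ha0 (fun hb => hdisj b0 hb hb0)
  set x := d.fst with hxdef
  set y := d.snd with hydef
  have hxy : G.Adj x y := d.adj
  have hxA : x ∈ A := hdA
  have hyB : y ∈ B := hAB _ hdnA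
  have hxyne : x ≠ y := fun hxe => hdisj x hxA (hxe ▸ hyB)
  set G' : SimpleGraph V := TA.map embA ⊔ TB.map embB ⊔ fromEdgeSet {s(x, y)} with hG'def
  -- G' ≤ G
  have hmapAle : TA.map embA ≤ G := by
    intro u v huv
    rw [map_adj] at huv
    obtain ⟨a, b, hab, rfl, rfl⟩ := huv
    exact hTAle hab
  have hmapBle : TB.map embB ≤ G := by
    intro u v huv
    rw [map_adj] at huv
    obtain ⟨a, b, hab, rfl, rfl⟩ := huv
    exact hTBle hab
  have hedgele : fromEdgeSet {s(x, y)} ≤ G := by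
    intro u v huv
    rw [fromEdgeSet_adj] at huv
    obtain ⟨he, hne⟩ := huv
    rw [Set.mem_singleton_iff, Sym2.eq_iff] at he
    rcases he with ⟨rfl, rfl⟩ | ⟨rfl, rfl⟩
    · exact hxy
    · exact hxy.symm
  have hle : G' ≤ G := sup_le (sup_le hmapAle hmapBle) hedgele
  -- walks within each color class
  have hleA : TA.map embA ≤ G' := le_sup_left.trans le_sup_left
  have hleB : TB.map embB ≤ G' := le_sup_right.trans le_sup_left
  let fA : TA →g G' := ⟨fun a => (a : V), fun {a b} hab =>
    hleA ((map_adj embA TA _ _).mpr ⟨a, b, hab, rfl, rfl⟩)⟩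
  let fB : TB →g G' := ⟨fun a => (a : V), fun {a b} hab =>
    hleB ((map_adj embB TB _ _).mpr ⟨a, b, hab, rfl, rfl⟩)⟩
  have keyA : ∀ u v : V, u ∈ A → v ∈ A → ∃ q : G'.Walk u v, ∀ w ∈ q.support, w ∈ A := by
    intro u v hu hv
    obtain ⟨p⟩ := hTAtree.isConnected.preconnected ⟨u, hu⟩ ⟨v, hv⟩
    refine ⟨p.map fA, ?_⟩
    intro w hw
    rw [Walk.support_map, List.mem_map] at hw
    obtain ⟨a, _, rfl⟩ := hw
    exact a.2
  have keyB : ∀ u v : V, u ∈ B → v ∈ B → ∃ q : G'.Walk u v, ∀ w ∈ q.support, w ∈ B := by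
    intro u v hu hv
    obtain ⟨p⟩ := hTBtree.isConnected.preconnected ⟨u, hu⟩ ⟨v, hv⟩
    refine ⟨p.map fB, ?_⟩
    intro w hw
    rw [Walk.support_map, List.mem_map] at hw
    obtain ⟨a, _, rfl⟩ := hw
    exact a.2
  have hxyG' : G'.Adj x y := (le_sup_right : fromEdgeSet {s(x, y)} ≤ G') ((fromEdgeSet_adj _).mpr ⟨rfl, hxyne⟩)
  have hreachx : ∀ u : V, G'.Reachable u x := by
    intro u
    rcases hcol2 u with hu | hu
    · obtain ⟨q, _⟩ := keyA u x hu hxA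
      exact ⟨q⟩
    · obtain ⟨q, _⟩ := keyB u y hu hyB
      exact Reachable.trans ⟨q⟩ (Adj.reachable hxyG'.symm)
  have hG'pre : G'.Preconnected := fun u v => (hreachx u).trans (hreachx v).symm
  -- color-avoiding connectivity of G'
  have hvcac : VertexColorAvoidingConnected G' col := by
    intro c u v
    refine ⟨hG'pre u v, ?_⟩
    by_cases hcu : col u = c
    · exact Or.inl hcu
    by_cases hcv : col v = c
    · exact Or.inr (Or.inl hcv)
    refine Or.inr (Or.inr ?_)
    by_cases hc1 : c = c1
    · subst hc1
      obtain ⟨q, hq⟩ := keyB u v (hAB u hcu) (hAB v hcv)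
      exact ⟨q, fun w hw hcw => hc12 (hcw.symm.trans (hq w hw))⟩
    by_cases hc2 : c = c2
    · subst hc2
      obtain ⟨q, hq⟩ := keyA u v (hBA u hcu) (hBA v hcv)
      exact ⟨q, fun w hw hcw => hc12 ((hq w hw).symm.trans hcw)⟩
    · obtain ⟨q⟩ := hG'pre u v
      refine ⟨q, fun w _ hcw => ?_⟩
      rcases hcol2 w with hw | hw
      · exact hc1 (hcw.symm.trans hw)
      · exact hc2 (hcw.symm.trans hw)
  -- edge count
  have hEA : (TA.map embA).edgeSet = Sym2.map embA '' TA.edgeSet := edgeSet_map' _ _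
  have hEB : (TB.map embB).edgeSet = Sym2.map embB '' TB.edgeSet := edgeSet_map' _ _
  have hmemA : ∀ e ∈ (TA.map embA).edgeSet, ∀ w ∈ e, w ∈ A := by
    intro e he w hwe
    rw [hEA] at he
    obtain ⟨e', _, rfl⟩ := he
    rw [Sym2.mem_map] at hwe
    obtain ⟨a, _, rfl⟩ := hwe
    exact a.2
  have hmemB : ∀ e ∈ (TB.map embB).edgeSet, ∀ w ∈ e, w ∈ B := by
    intro e he w hwe
    rw [hEB] at he
    obtain ⟨e', _, rfl⟩ := he
    rw [Sym2.mem_map] at hwe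
    obtain ⟨a, _, rfl⟩ := hwe
    exact a.2
  have hdAB : Disjoint (TA.map embA).edgeSet (TB.map embB).edgeSet := by
    rw [Set.disjoint_left]
    intro e hea heb
    exact hdisj _ (hmemA e hea _ (Sym2.out_fst_mem e)) (hmemB e heb _ (Sym2.out_fst_mem e))
  have hxyA : s(x, y) ∉ (TA.map embA).edgeSet := fun he =>
    hdisj y (hmemA _ he y (Sym2.mem_mk_right x y)) hyB
  have hxyB : s(x, y) ∉ (TB.map embB).edgeSet := fun he =>
    hdisj x hxA (hmemB _ he x (Sym2.mem_mk_left x y))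
  have hEe : (fromEdgeSet {s(x, y)} : SimpleGraph V).edgeSet = {s(x, y)} := by
    rw [edgeSet_fromEdgeSet]
    ext e
    simp only [Set.mem_diff, Set.mem_singleton_iff, Set.mem_setOf_eq]
    constructor
    · tauto
    · rintro rfl
      exact ⟨rfl, by simp [hxyne]⟩
  have hG'edge : G'.edgeSet =
      ((TA.map embA).edgeSet ∪ (TB.map embB).edgeSet) ∪ {s(x, y)} := by
    rw [hG'def, edgeSet_sup, edgeSet_sup, hEe]
  have hcardA : (TA.map embA).edgeSet.ncard = Fintype.card A - 1 := by
    rw [hEA, Set.ncard_image_of_injective _ (Sym2.map.injective embA.injective)]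
    have h1 := hTAtree.card_edgeFinset
    have h2 : TA.edgeSet.ncard = TA.edgeFinset.card := by
      rw [Set.ncard_eq_toFinset_card']
      congr 1
    omega
  have hcardB : (TB.map embB).edgeSet.ncard = Fintype.card B - 1 := by
    rw [hEB, Set.ncard_image_of_injective _ (Sym2.map.injective embB.injective)]
    have h1 := hTBtree.card_edgeFinset
    have h2 : TB.edgeSet.ncard = TB.edgeFinset.card := by
      rw [Set.ncard_eq_toFinset_card']
      congr 1
    omega
  have hcompl : B = Aᶜ := by
    ext v
    simp only [Set.mem_compl_iff, hA, hB, Set.mem_setOf_eq]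
    constructor
    · intro hv hv1
      exact hc12 (hv1.symm.trans hv)
    · intro hv
      exact (hcol2 v).resolve_left hv
  have hsum : Fintype.card A + Fintype.card B = Fintype.card V := by
    have h1 : (A : Set V).ncard = Fintype.card A := by
      rw [Set.ncard_eq_toFinset_card', Set.toFinset_card]
    have h2 : (B : Set V).ncard = Fintype.card B := by
      rw [Set.ncard_eq_toFinset_card', Set.toFinset_card]
    have h3 := Set.ncard_add_ncard_compl A
    rw [← hcompl] at h3
    rw [← h1, ← h2, h3]
    exact Nat.card_eq_fintype_card
  have hApos : 1 ≤ Fintype.card A := Fintype.card_pos_iff.mpr ⟨⟨a0, ha0⟩⟩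
  have hBpos : 1 ≤ Fintype.card B := Fintype.card_pos_iff.mpr ⟨⟨b0, hb0⟩⟩
  have hcount : G'.edgeSet.ncard = Fintype.card V - 1 := by
    rw [hG'edge,
      Set.ncard_union_eq (by
        rw [Set.disjoint_singleton_right]
        intro hmem
        rcases hmem with hmem | hmem
        · exact hxyA hmem
        · exact hxyB hmem) (Set.toFinite _) (Set.toFinite _),
      Set.ncard_union_eq hdAB (Set.toFinite _) (Set.toFinite _),
      hcardA, hcardB, Set.ncard_singleton]
    omega
  exact ⟨G', hle, hvcac, hcount⟩
end
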